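/- Let κ be a regular cardinal and μ a (κ,κ⁺)-cardinal. If X and Y are elements of μ of the same rank, then the unique order-preserving bijection f_{XY} : Y → X restricts to the identity on X ∩ Y. -/

import Mathlib

open Set Cardinal Ordinal

noncomputable section

/-- Lower a (small) ordinal of `Ordinal.{1}` to `Ordinal.{0}` (the inverse of `Ordinal.lift`
on its range). -/
noncomputable def olower (o : Ordinal.{1}) : Ordinal.{0} :=
  sInf {a : Ordinal.{0} | Ordinal.lift.{1} a = o}

/-- The order type of a set of ordinals. -/
noncomputable def otp (A : Set Ordinal.{0}) : Ordinal.{0} :=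
  olower (Ordinal.type (Subrel ((· < ·) : Ordinal → Ordinal → Prop) (· ∈ A)))

/-- The canonical order-preserving transfer map from a set of ordinals `X` to a set of
ordinals `Y` of the same order type: an element `a ∈ X` is sent to the unique element of `Y`
occupying the same position. -/
noncomputable def omap (X Y : Set Ordinal) (a : Ordinal) : Ordinal :=
  sInf {b | b ∈ Y ∧ otp (Y ∩ Set.Iio b) = otp (X ∩ Set.Iio a)}

/-- `IsStar X₁ X₂ X` says `X = X₁ * X₂`: `X₁` and `X₂` have the same order type,
`X = X₁ ∪ X₂`, and `X₁ ∩ X₂ < X₁ \ X₂ < X₂ \ X₁` elementwise. -/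
def IsStar (X₁ X₂ X : Set Ordinal) : Prop :=
  otp X₁ = otp X₂ ∧ X = X₁ ∪ X₂ ∧
  (∀ a ∈ X₁ ∩ X₂, ∀ b ∈ X₁ \ X₂, a < b) ∧
  (∀ b ∈ X₁ \ X₂, ∀ c ∈ X₂ \ X₁, b < c)

/-- The rank of `a` under a well-founded relation (Mathlib's removed `WellFounded.rank`). -/
noncomputable def WellFounded.rank {α : Type*} {r : α → α → Prop} (hwf : WellFounded r) (a : α) :
    Ordinal := (hwf.apply a).rank

set_option linter.deprecated false in
/-- A `(κ,κ⁺)`-cardinal (a neat simplified `(κ,1)`-morass presented as a family of sets):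
a family `μ ⊆ ℘_κ(κ⁺)` which is well-founded under strict inclusion, locally small,
homogeneous, directed, locally almost directed, covers `κ⁺` and is neat. -/
structure TwoCardinal (κ : Cardinal.{0}) where
  mu : Set (Set Ordinal)
  mem_sub : ∀ X ∈ mu, X ⊆ Set.Iio (Order.succ κ).ord
  mem_small : ∀ X ∈ mu, (otp X).card < κ
  wf : WellFounded fun X Y : mu => (X : Set Ordinal) ⊂ (Y : Set Ordinal)
  locSmall : ∀ X : mu,
    #{Z : mu // (Z : Set Ordinal) ⊂ (X : Set Ordinal)} < Cardinal.lift.{1} κ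
  homog : ∀ X Y : mu, wf.rank X = wf.rank Y →
    otp (X : Set Ordinal) = otp (Y : Set Ordinal) ∧
    {Z | Z ∈ mu ∧ Z ⊂ (Y : Set Ordinal)} =
      (fun Z => omap (X : Set Ordinal) (Y : Set Ordinal) '' Z) ''
        {Z | Z ∈ mu ∧ Z ⊂ (X : Set Ordinal)}
  directed : ∀ X ∈ mu, ∀ Y ∈ mu, ∃ Z ∈ mu, X ⊆ Z ∧ Y ⊆ Z
  locAlmostDirected : ∀ X : mu,
    (∀ Z₁ ∈ mu, ∀ Z₂ ∈ mu, Z₁ ⊂ (X : Set Ordinal) → Z₂ ⊂ (X : Set Ordinal) →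
      ∃ Z ∈ mu, Z ⊂ (X : Set Ordinal) ∧ Z₁ ⊆ Z ∧ Z₂ ⊆ Z) ∨
    (∃ X₁ X₂ : mu, wf.rank X₁ = wf.rank X₂ ∧
      IsStar (X₁ : Set Ordinal) (X₂ : Set Ordinal) (X : Set Ordinal) ∧
      {Z | Z ∈ mu ∧ Z ⊂ (X : Set Ordinal)} =
        {Z | Z ∈ mu ∧ Z ⊂ (X₁ : Set Ordinal)} ∪ {Z | Z ∈ mu ∧ Z ⊂ (X₂ : Set Ordinal)} ∪
          {(X₁ : Set Ordinal), (X₂ : Set Ordinal)})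
  covers : ⋃₀ mu = Set.Iio (Order.succ κ).ord
  neat : ∀ X : mu, wf.rank X ≠ 0 →
    (X : Set Ordinal) = ⋃₀ {Z | Z ∈ mu ∧ Z ⊂ (X : Set Ordinal)}

namespace TwoCardinal

variable {κ : Cardinal} (M : TwoCardinal κ)

set_option linter.deprecated false in
/-- The rank of an element of `μ` in the well-founded order `(μ, ⊂)`. -/
noncomputable def rank (X : M.mu) : Ordinal := olower (M.wf.rank X)

/-- The height of the well-founded order `(μ, ⊂)`. -/
noncomputable def ht : Ordinal := sSup (Set.range fun X : M.mu => M.rank X + 1)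

/-- The term `μ_ξ(α)` of the μ-sequence at `α`: equal to `X ∩ α` for any `X ∈ μ` of
rank `ξ` containing `α` (this is independent of the choice of `X`). -/
noncomputable def seq (α ξ : Ordinal) : Set Ordinal :=
  ⋃₀ {S | ∃ X : M.mu, M.rank X = ξ ∧ α ∈ (X : Set Ordinal) ∧
    S = (X : Set Ordinal) ∩ Set.Iio α}

/-- The μ-coloring `m(α,β) = min{rank X : α, β ∈ X ∈ μ}`. -/
noncomputable def mcol (a b : Ordinal) : Ordinal :=
  sInf {ξ | ∃ X : M.mu, M.rank X = ξ ∧ a ∈ (X : Set Ordinal) ∧ b ∈ (X : Set Ordinal)}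

end TwoCardinal

/-! ### Auxiliary development -/

namespace MorassAux

set_option linter.deprecated false

/-- `Ordinal.{1}`-valued order type of a set of ordinals. -/
noncomputable def ot (A : Set Ordinal.{0}) : Ordinal.{1} :=
  Ordinal.type (Subrel ((· < ·) : Ordinal → Ordinal → Prop) (· ∈ A))

theorem otp_def (A : Set Ordinal.{0}) : otp A = olower (ot A) := rfl

theorem olower_lift (a : Ordinal.{0}) : olower (Ordinal.lift.{1} a) = a := by
  have h : {b : Ordinal.{0} | Ordinal.lift.{1} b = Ordinal.lift.{1} a} = {a} := by
    ext b; simp [Ordinal.lift_inj]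
  rw [olower, h, csInf_singleton]

theorem ot_mono {A B : Set Ordinal.{0}} (h : A ⊆ B) : ot A ≤ ot B :=
  Ordinal.type_le_iff'.2 ⟨⟨⟨Set.inclusion h, Set.inclusion_injective h⟩, Iff.rfl⟩⟩

theorem ot_lt_of_forall_lt {A B : Set Ordinal.{0}} (hAB : A ⊆ B) {b : Ordinal}
    (hb : b ∈ B) (h : ∀ a ∈ A, a < b) : ot A < ot B := by
  have h1 : ot A < ot (insert b A) := by
    refine PrincipalSeg.ordinal_type_lt
      ⟨⟨⟨Set.inclusion (Set.subset_insert b A),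
        Set.inclusion_injective (Set.subset_insert b A)⟩, Iff.rfl⟩,
        ⟨b, Set.mem_insert b A⟩, ?_⟩
    rintro ⟨y, hy⟩
    constructor
    · rintro ⟨⟨x, hx⟩, hfx⟩
      have hxy : x = y := congrArg Subtype.val hfx
      subst hxy
      exact h x hx
    · intro hyb
      rcases hy with rfl | hyA
      · exact absurd hyb (lt_irrefl _)
      · exact ⟨⟨y, hyA⟩, rfl⟩
  exact h1.trans_le (ot_mono (Set.insert_subset_iff.2 ⟨hb, hAB⟩))

theorem ot_seg_lt {Y : Set Ordinal.{0}} {b b' : Ordinal} (hb : b ∈ Y) (h : b < b') :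
    ot (Y ∩ Set.Iio b) < ot (Y ∩ Set.Iio b') :=
  ot_lt_of_forall_lt (fun x hx => ⟨hx.1, hx.2.trans h⟩) ⟨hb, h⟩ (fun _ ha => ha.2)

theorem seg_inj {Y : Set Ordinal.{0}} {b b' : Ordinal} (hb : b ∈ Y) (hb' : b' ∈ Y)
    (h : ot (Y ∩ Set.Iio b) = ot (Y ∩ Set.Iio b')) : b = b' := by
  rcases lt_trichotomy b b' with hlt | heq | hgt
  · exact absurd h (ne_of_lt (ot_seg_lt hb hlt))
  · exact heq
  · exact absurd h.symm (ne_of_lt (ot_seg_lt hb' hgt))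

theorem ot_image {A D : Set Ordinal.{0}} {f : Ordinal → Ordinal} (hD : A ⊆ D)
    (hf : StrictMonoOn f D) : ot (f '' A) = ot A := by
  have hmono : StrictMonoOn f A := fun x hx y hy => hf (hD hx) (hD hy)
  refine (RelIso.ordinal_type_eq (RelIso.ofSurjective
    ⟨⟨fun x => ⟨f x.1, Set.mem_image_of_mem f x.2⟩, ?_⟩, ?_⟩ ?_)).symm
  · intro x y hxy
    exact Subtype.ext (hmono.injOn x.2 y.2 (congrArg Subtype.val hxy))
  · intro x y
    exact hmono.lt_iff_lt x.2 y.2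
  · rintro ⟨y, x, hx, rfl⟩
    exact ⟨⟨x, hx⟩, rfl⟩

theorem lift_otp {A : Set Ordinal.{0}} {o : Ordinal} (h : A ⊆ Set.Iio o) :
    Ordinal.lift.{1} (otp A) = ot A := by
  have hIio : ot (Set.Iio o) = Ordinal.lift.{1} o := by
    rw [ot]
    exact (Ordinal.type_subrel _ o).trans (by rw [Ordinal.typein_ordinal])
  have hle : ot A ≤ Ordinal.lift.{1} o := le_of_le_of_eq (ot_mono h) hIio
  obtain ⟨a, ha⟩ := Ordinal.mem_range_lift_of_le hle
  rw [otp_def, ← ha, olower_lift, ha]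

theorem otp_iff_ot {A B : Set Ordinal.{0}} {o o' : Ordinal} (hA : A ⊆ Set.Iio o)
    (hB : B ⊆ Set.Iio o') : otp A = otp B ↔ ot A = ot B := by
  constructor
  · intro h; rw [← lift_otp hA, ← lift_otp hB, h]
  · intro h
    have h2 := lift_otp hA
    rw [h, ← lift_otp hB] at h2
    exact Ordinal.lift_inj.1 h2

theorem omap_spec {X Y : Set Ordinal.{0}} {o o' a : Ordinal} (hX : X ⊆ Set.Iio o)
    (hY : Y ⊆ Set.Iio o') (heq : ot X = ot Y) (ha : a ∈ X) :
    omap X Y a ∈ Y ∧ ot (Y ∩ Set.Iio (omap X Y a)) = ot (X ∩ Set.Iio a) := by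
  obtain ⟨g⟩ := Ordinal.type_eq.1 heq
  set b : Ordinal := (g ⟨a, ha⟩).1 with hbdef
  have hbY : b ∈ Y := (g ⟨a, ha⟩).2
  have hseg : ot (Y ∩ Set.Iio b) = ot (X ∩ Set.Iio a) := by
    have hto : ∀ x : ↥(X ∩ Set.Iio a), ((g ⟨x.1, x.2.1⟩ : ↥Y) : Ordinal) ∈ Y ∩ Set.Iio b :=
      fun x => ⟨(g ⟨x.1, x.2.1⟩).2, g.map_rel_iff.2 x.2.2⟩
    refine (RelIso.ordinal_type_eq (RelIso.ofSurjective
      ⟨⟨fun x => ⟨((g ⟨x.1, x.2.1⟩ : ↥Y) : Ordinal), hto x⟩, ?_⟩, ?_⟩ ?_)).symm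
    · intro x y hxy
      have h1 := congrArg (Subtype.val : ↥(Y ∩ Set.Iio b) → Ordinal) hxy
      have h2 : (⟨x.1, x.2.1⟩ : ↥X) = ⟨y.1, y.2.1⟩ := g.injective (Subtype.ext h1)
      have h3 := congrArg (Subtype.val : ↥X → Ordinal) h2
      exact Subtype.ext h3
    · intro x y
      exact g.map_rel_iff
    · rintro ⟨y, hyY, hyb⟩
      refine ⟨⟨(g.symm ⟨y, hyY⟩).1, (g.symm ⟨y, hyY⟩).2, ?_⟩, ?_⟩
      · have : Subrel ((· < ·) : Ordinal → Ordinal → Prop) Y (g (g.symm ⟨y, hyY⟩)) (g ⟨a, ha⟩) := by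
          rw [g.apply_symm_apply]; exact hyb
        exact g.map_rel_iff.1 this
      · apply Subtype.ext
        show (g ⟨(g.symm ⟨y, hyY⟩).1, (g.symm ⟨y, hyY⟩).2⟩ : Ordinal) = y
        rw [show (⟨(g.symm ⟨y, hyY⟩).1, (g.symm ⟨y, hyY⟩).2⟩ : X) = g.symm ⟨y, hyY⟩ from rfl,
          g.apply_symm_apply]
  have hb_mem : b ∈ {c | c ∈ Y ∧ otp (Y ∩ Set.Iio c) = otp (X ∩ Set.Iio a)} :=
    ⟨hbY, (otp_iff_ot (Set.inter_subset_left.trans hY) (Set.inter_subset_left.trans hX)).2 hseg⟩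
  have hmem := csInf_mem ⟨b, hb_mem⟩
  exact ⟨hmem.1,
    (otp_iff_ot (Set.inter_subset_left.trans hY) (Set.inter_subset_left.trans hX)).1 hmem.2⟩

theorem omap_eq {X Y : Set Ordinal.{0}} {o o' a : Ordinal} (hX : X ⊆ Set.Iio o)
    (hY : Y ⊆ Set.Iio o') (heq : ot X = ot Y) (ha : a ∈ X) {b : Ordinal} (hb : b ∈ Y)
    (hseg : ot (Y ∩ Set.Iio b) = ot (X ∩ Set.Iio a)) : omap X Y a = b := by
  obtain ⟨h1, h2⟩ := omap_spec hX hY heq ha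
  exact seg_inj h1 hb (h2.trans hseg.symm)

theorem omap_strictMonoOn {X Y : Set Ordinal.{0}} {o o' : Ordinal} (hX : X ⊆ Set.Iio o)
    (hY : Y ⊆ Set.Iio o') (heq : ot X = ot Y) : StrictMonoOn (omap X Y) X := by
  intro x hx y hy hxy
  obtain ⟨h1x, h2x⟩ := omap_spec hX hY heq hx
  obtain ⟨h1y, h2y⟩ := omap_spec hX hY heq hy
  have hlt : ot (Y ∩ Set.Iio (omap X Y x)) < ot (Y ∩ Set.Iio (omap X Y y)) := by
    rw [h2x, h2y]; exact ot_seg_lt hx hxy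
  rcases lt_trichotomy (omap X Y x) (omap X Y y) with h | h | h
  · exact h
  · rw [h] at hlt; exact absurd hlt (lt_irrefl _)
  · exact absurd (ot_seg_lt h1y h) (not_lt.2 hlt.le)

theorem omap_image {X Y : Set Ordinal.{0}} {o o' : Ordinal} (hX : X ⊆ Set.Iio o)
    (hY : Y ⊆ Set.Iio o') (heq : ot X = ot Y) : omap X Y '' X = Y := by
  apply Set.Subset.antisymm
  · rintro _ ⟨x, hx, rfl⟩
    exact (omap_spec hX hY heq hx).1
  · intro y hy
    obtain ⟨h1, h2⟩ := omap_spec hY hX heq.symm hy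
    exact ⟨omap Y X y, h1, omap_eq hX hY heq h1 hy h2.symm⟩

end MorassAux

theorem WellFounded.rank_eq {α : Type*} {r : α → α → Prop} (hwf : WellFounded r) (a : α) :
    hwf.rank a = ⨆ b : { b // r b a }, Order.succ (hwf.rank b) :=
  (hwf.apply a).rank_eq

theorem WellFounded.rank_lt_of_rel {α : Type*} {r : α → α → Prop} (hwf : WellFounded r)
    {a b : α} (h : r a b) : hwf.rank a < hwf.rank b :=
  Acc.rank_lt_of_rel _ h

namespace TwoCardinal

open MorassAux

set_option linter.deprecated false

variable {κ : Cardinal} (M : TwoCardinal κ)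

theorem wfrank_lt (hκ : κ.IsRegular) :
    ∀ X : M.mu, M.wf.rank X < Ordinal.lift.{1} (Order.succ κ).ord := by
  have hlim : Order.IsSuccLimit (Ordinal.lift.{1} (Order.succ κ).ord) := by
    rw [Cardinal.lift_ord]
    exact Cardinal.isSuccLimit_ord (Cardinal.aleph0_le_lift.2 (hκ.aleph0_le.trans (Order.le_succ κ)))
  have hcof : (Ordinal.lift.{1} (Order.succ κ).ord).cof = Cardinal.lift.{1} (Order.succ κ) := by
    rw [← Ordinal.lift_cof, (Cardinal.isRegular_succ hκ.aleph0_le).cof_eq]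
  intro X
  induction X using WellFounded.induction M.wf with
  | _ X IH =>
    rw [M.wf.rank_eq]
    apply Ordinal.iSup_lt_ord
    · rw [hcof]
      exact (M.locSmall X).trans_le (Cardinal.lift_le.2 (Order.le_succ κ))
    · rintro ⟨Z, hZ⟩
      exact hlim.succ_lt (IH Z hZ)

theorem wfrank_eq (hκ : κ.IsRegular) {X Y : M.mu} (h : M.rank X = M.rank Y) :
    M.wf.rank X = M.wf.rank Y := by
  obtain ⟨u, hu⟩ := Ordinal.mem_range_lift_of_le (M.wfrank_lt hκ X).le
  obtain ⟨v, hv⟩ := Ordinal.mem_range_lift_of_le (M.wfrank_lt hκ Y).le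
  rw [TwoCardinal.rank, TwoCardinal.rank, ← hu, ← hv, olower_lift, olower_lift] at h
  rw [← hu, ← hv, h]

theorem rank_image {f : Ordinal → Ordinal} (W₁ W₂ : M.mu)
    (hinj : Set.InjOn f (W₁ : Set Ordinal))
    (hset : {Z | Z ∈ M.mu ∧ Z ⊂ (W₂ : Set Ordinal)} =
      (fun Z => f '' Z) '' {Z | Z ∈ M.mu ∧ Z ⊂ (W₁ : Set Ordinal)}) :
    ∀ Z : M.mu, (Z : Set Ordinal) ⊂ (W₁ : Set Ordinal) →
      ∃ Z' : M.mu, (Z' : Set Ordinal) = f '' (Z : Set Ordinal) ∧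
        M.wf.rank Z' = M.wf.rank Z := by
  intro Z
  induction Z using WellFounded.induction M.wf with
  | _ Z IH =>
    intro hZ
    have himg : f '' (Z : Set Ordinal) ∈ {Z | Z ∈ M.mu ∧ Z ⊂ (W₂ : Set Ordinal)} := by
      rw [hset]; exact ⟨(Z : Set Ordinal), ⟨Z.2, hZ⟩, rfl⟩
    refine ⟨⟨f '' (Z : Set Ordinal), himg.1⟩, rfl, ?_⟩
    rw [M.wf.rank_eq, M.wf.rank_eq, ← sSup_range, ← sSup_range]
    congr 1
    ext o
    simp only [Set.mem_range]
    constructor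
    · rintro ⟨⟨B, hB⟩, rfl⟩
      have hBW₂ : (B : Set Ordinal) ⊂ (W₂ : Set Ordinal) := hB.trans himg.2
      have hBmem : (B : Set Ordinal) ∈ {Z | Z ∈ M.mu ∧ Z ⊂ (W₂ : Set Ordinal)} := ⟨B.2, hBW₂⟩
      rw [hset] at hBmem
      obtain ⟨C, ⟨hCmu, hCW₁⟩, hCeq⟩ := hBmem
      have hCZ : C ⊂ (Z : Set Ordinal) := by
        rw [← hinj.image_ssubset_image_iff hCW₁.subset hZ.subset]
        rw [show f '' C = (B : Set Ordinal) from hCeq]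
        exact hB
      obtain ⟨C', hC'val, hC'rank⟩ := IH ⟨C, hCmu⟩ hCZ hCW₁
      have hBC' : B = C' := Subtype.ext (by rw [hC'val]; exact hCeq.symm)
      exact ⟨⟨⟨C, hCmu⟩, hCZ⟩, by rw [← hC'rank, ← hBC']⟩
    · rintro ⟨⟨B, hB⟩, rfl⟩
      obtain ⟨B', hB'val, hB'rank⟩ := IH B hB (hB.trans hZ)
      have hB'Z : (B' : Set Ordinal) ⊂ f '' (Z : Set Ordinal) := by
        rw [hB'val]
        exact (hinj.image_ssubset_image_iff (hB.subset.trans hZ.subset) hZ.subset).2 hB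
      exact ⟨⟨B', hB'Z⟩, by rw [hB'rank]⟩

theorem star_step {W₁ W₂ : M.mu}
    (hrk12 : M.wf.rank W₁ = M.wf.rank W₂)
    (h12 : ∀ a ∈ (W₁ : Set Ordinal) ∩ (W₂ : Set Ordinal),
      ∀ b ∈ (W₁ : Set Ordinal) \ (W₂ : Set Ordinal), a < b)
    (h23 : ∀ b ∈ (W₁ : Set Ordinal) \ (W₂ : Set Ordinal),
      ∀ c ∈ (W₂ : Set Ordinal) \ (W₁ : Set Ordinal), b < c)
    (hne : ((W₁ : Set Ordinal) \ (W₂ : Set Ordinal)).Nonempty)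
    (IH2 : ∀ X Y : M.mu, (X : Set Ordinal) ⊆ (W₂ : Set Ordinal) →
      (Y : Set Ordinal) ⊆ (W₂ : Set Ordinal) → M.wf.rank X = M.wf.rank Y →
      ∀ a, a ∈ (X : Set Ordinal) → a ∈ (Y : Set Ordinal) →
        ot ((X : Set Ordinal) ∩ Set.Iio a) = ot ((Y : Set Ordinal) ∩ Set.Iio a))
    (X Y : M.mu) (hX : (X : Set Ordinal) ⊆ (W₁ : Set Ordinal))
    (hY : (Y : Set Ordinal) ⊆ (W₂ : Set Ordinal))
    (hrkXY : M.wf.rank X = M.wf.rank Y) {a : Ordinal}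
    (haX : a ∈ (X : Set Ordinal)) (haY : a ∈ (Y : Set Ordinal)) :
    ot ((X : Set Ordinal) ∩ Set.Iio a) = ot ((Y : Set Ordinal) ∩ Set.Iio a) := by
  obtain ⟨hotp, hset⟩ := M.homog W₁ W₂ hrk12
  have hbd : ∀ Z : M.mu, (Z : Set Ordinal) ⊆ Set.Iio (Order.succ κ).ord :=
    fun Z => M.mem_sub Z.1 Z.2
  have hot12 : ot (W₁ : Set Ordinal) = ot (W₂ : Set Ordinal) :=
    (otp_iff_ot (hbd W₁) (hbd W₂)).1 hotp
  set f := omap ((W₁ : Set Ordinal)) ((W₂ : Set Ordinal)) with hf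
  have hseg : ∀ x ∈ (W₁ : Set Ordinal) ∩ (W₂ : Set Ordinal),
      (W₁ : Set Ordinal) ∩ Set.Iio x = (W₂ : Set Ordinal) ∩ Set.Iio x := by
    intro x hx
    ext z
    constructor
    · rintro ⟨hz1, hzx⟩
      refine ⟨?_, hzx⟩
      by_contra hz2
      exact absurd hzx (not_lt.2 (h12 x hx z ⟨hz1, hz2⟩).le)
    · rintro ⟨hz2, hzx⟩
      refine ⟨?_, hzx⟩
      by_contra hz1
      obtain ⟨b, hb⟩ := hne
      exact absurd hzx (not_lt.2 ((h12 x hx b hb).trans (h23 b hb z ⟨hz2, hz1⟩)).le)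
  have hfix : ∀ x ∈ (W₁ : Set Ordinal) ∩ (W₂ : Set Ordinal), f x = x := by
    intro x hx
    exact omap_eq (hbd W₁) (hbd W₂) hot12 hx.1 hx.2 (by rw [hseg x hx])
  have hmono : StrictMonoOn f (W₁ : Set Ordinal) :=
    omap_strictMonoOn (hbd W₁) (hbd W₂) hot12
  have himg : f '' (W₁ : Set Ordinal) = (W₂ : Set Ordinal) :=
    omap_image (hbd W₁) (hbd W₂) hot12
  have haW : a ∈ (W₁ : Set Ordinal) ∩ (W₂ : Set Ordinal) := ⟨hX haX, hY haY⟩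
  obtain ⟨X', hX'val, hX'rank⟩ : ∃ X' : M.mu, (X' : Set Ordinal) = f '' (X : Set Ordinal) ∧
      M.wf.rank X' = M.wf.rank X := by
    rcases eq_or_ne (X : Set Ordinal) (W₁ : Set Ordinal) with heq | hne'
    · refine ⟨W₂, ?_, ?_⟩
      · rw [heq, himg]
      · have hXW₁ : X = W₁ := Subtype.ext heq
        rw [hXW₁]; exact hrk12.symm
    · exact M.rank_image W₁ W₂ hmono.injOn hset X (Set.ssubset_iff_subset_ne.2 ⟨hX, hne'⟩)
  have haX' : a ∈ (X' : Set Ordinal) := by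
    rw [hX'val]
    exact ⟨a, haX, hfix a haW⟩
  have hX'W₂ : (X' : Set Ordinal) ⊆ (W₂ : Set Ordinal) := by
    rw [hX'val, ← himg]
    exact Set.image_mono hX
  have himg_seg : f '' ((X : Set Ordinal) ∩ Set.Iio a) = (X' : Set Ordinal) ∩ Set.Iio a := by
    rw [hX'val]
    ext y
    constructor
    · rintro ⟨x, ⟨hxX, hxa⟩, rfl⟩
      refine ⟨⟨x, hxX, rfl⟩, ?_⟩
      have hlt := hmono (hX hxX) haW.1 hxa
      rwa [hfix a haW] at hlt
    · rintro ⟨⟨x, hxX, rfl⟩, hya⟩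
      refine ⟨x, ⟨hxX, ?_⟩, rfl⟩
      rw [← hfix a haW] at hya
      exact (hmono.lt_iff_lt (hX hxX) haW.1).1 hya
  have h1 : ot ((X' : Set Ordinal) ∩ Set.Iio a) = ot ((X : Set Ordinal) ∩ Set.Iio a) := by
    rw [← himg_seg]
    exact ot_image (Set.inter_subset_left.trans hX) hmono
  have h2 := IH2 X' Y hX'W₂ hY (hX'rank.trans hrkXY) a haX' haY
  rw [← h1, h2]

theorem key : ∀ W X Y : M.mu, (X : Set Ordinal) ⊆ (W : Set Ordinal) →
    (Y : Set Ordinal) ⊆ (W : Set Ordinal) → M.wf.rank X = M.wf.rank Y →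
    ∀ a, a ∈ (X : Set Ordinal) → a ∈ (Y : Set Ordinal) →
    ot ((X : Set Ordinal) ∩ Set.Iio a) = ot ((Y : Set Ordinal) ∩ Set.Iio a) := by
  intro W
  induction W using WellFounded.induction M.wf with
  | _ W IH =>
    intro X Y hX hY hrk a haX haY
    rcases eq_or_ne (X : Set Ordinal) (W : Set Ordinal) with hXW | hXW
    · rcases eq_or_ne (Y : Set Ordinal) (X : Set Ordinal) with hYX | hYX
      · rw [hYX]
      · have hss : (Y : Set Ordinal) ⊂ (X : Set Ordinal) :=
          Set.ssubset_iff_subset_ne.2 ⟨by rw [hXW]; exact hY, hYX⟩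
        exact absurd (M.wf.rank_lt_of_rel hss) (by rw [hrk]; exact lt_irrefl _)
    have hXW' : (X : Set Ordinal) ⊂ (W : Set Ordinal) :=
      Set.ssubset_iff_subset_ne.2 ⟨hX, hXW⟩
    rcases eq_or_ne (Y : Set Ordinal) (W : Set Ordinal) with hYW | hYW
    · have hss : (X : Set Ordinal) ⊂ (Y : Set Ordinal) := by rw [hYW]; exact hXW'
      exact absurd (M.wf.rank_lt_of_rel hss) (by rw [hrk]; exact lt_irrefl _)
    have hYW' : (Y : Set Ordinal) ⊂ (W : Set Ordinal) :=
      Set.ssubset_iff_subset_ne.2 ⟨hY, hYW⟩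
    rcases M.locAlmostDirected W with hdir | ⟨W₁, W₂, hrk12, hstar, hset⟩
    · obtain ⟨Z, hZmu, hZW, hXZ, hYZ⟩ := hdir (X : Set Ordinal) X.2 (Y : Set Ordinal) Y.2 hXW' hYW'
      exact IH ⟨Z, hZmu⟩ hZW X Y hXZ hYZ hrk a haX haY
    · obtain ⟨hotp12, hunion, h12, h23⟩ := hstar
      have hW₁W : (W₁ : Set Ordinal) ⊂ (W : Set Ordinal) := by
        have hmem : (W₁ : Set Ordinal) ∈ {Z | Z ∈ M.mu ∧ Z ⊂ (W : Set Ordinal)} := by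
          rw [hset]
          exact Set.mem_union_right _ (Set.mem_insert _ _)
        exact hmem.2
      have hW₂W : (W₂ : Set Ordinal) ⊂ (W : Set Ordinal) := by
        have hmem : (W₂ : Set Ordinal) ∈ {Z | Z ∈ M.mu ∧ Z ⊂ (W : Set Ordinal)} := by
          rw [hset]
          exact Set.mem_union_right _ (Set.mem_insert_iff.2 (Or.inr rfl))
        exact hmem.2
      have hne : ((W₁ : Set Ordinal) \ (W₂ : Set Ordinal)).Nonempty := by
        rw [Set.nonempty_iff_ne_empty]
        intro hcon
        have hsub : (W₁ : Set Ordinal) ⊆ (W₂ : Set Ordinal) := Set.diff_eq_empty.1 hcon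
        have hWW₂ : (W : Set Ordinal) = (W₂ : Set Ordinal) := by
          rw [hunion, Set.union_eq_self_of_subset_left hsub]
        have h2 := hW₂W
        rw [hWW₂] at h2
        exact (Set.ssubset_iff_subset_ne.1 h2).2 rfl
      have hcases : ∀ Z : M.mu, (Z : Set Ordinal) ⊂ (W : Set Ordinal) →
          (Z : Set Ordinal) ⊆ (W₁ : Set Ordinal) ∨ (Z : Set Ordinal) ⊆ (W₂ : Set Ordinal) := by
        intro Z hZ
        have hmem : (Z : Set Ordinal) ∈ {Z | Z ∈ M.mu ∧ Z ⊂ (W : Set Ordinal)} := ⟨Z.2, hZ⟩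
        rw [hset] at hmem
        simp only [Set.mem_union, Set.mem_setOf_eq, Set.mem_insert_iff,
          Set.mem_singleton_iff] at hmem
        rcases hmem with (⟨_, h⟩ | ⟨_, h⟩) | (h | h)
        · exact Or.inl h.subset
        · exact Or.inr h.subset
        · exact Or.inl (by rw [h])
        · exact Or.inr (by rw [h])
      have hIH1 := IH W₁ hW₁W
      have hIH2 := IH W₂ hW₂W
      rcases hcases X hXW' with hX1 | hX2 <;> rcases hcases Y hYW' with hY1 | hY2
      · exact hIH1 X Y hX1 hY1 hrk a haX haY
      · exact M.star_step hrk12 h12 h23 hne hIH2 X Y hX1 hY2 hrk haX haY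
      · exact (M.star_step hrk12 h12 h23 hne hIH2 Y X hY1 hX2 hrk.symm haY haX).symm
      · exact hIH2 X Y hX2 hY2 hrk a haX haY

end TwoCardinal

/-- For `X, Y ∈ μ` of the same rank, the unique order-preserving bijection `f_{XY} : Y → X`
is the identity on `X ∩ Y`. -/
theorem omap_id_on_inter (κ : Cardinal) (hκ : κ.IsRegular) (M : TwoCardinal κ)
    (X Y : M.mu) (hrk : M.rank X = M.rank Y) (a : Ordinal)
    (ha : a ∈ (X : Set Ordinal) ∩ (Y : Set Ordinal)) :
    omap (Y : Set Ordinal) (X : Set Ordinal) a = a := by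
  have hwrk : M.wf.rank X = M.wf.rank Y := M.wfrank_eq hκ hrk
  obtain ⟨W, hWmu, hXW, hYW⟩ := M.directed (X : Set Ordinal) X.2 (Y : Set Ordinal) Y.2
  have hkey := M.key ⟨W, hWmu⟩ X Y hXW hYW hwrk a ha.1 ha.2
  have hbdX := M.mem_sub (X : Set Ordinal) X.2
  have hbdY := M.mem_sub (Y : Set Ordinal) Y.2
  have hotYX : MorassAux.ot (Y : Set Ordinal) = MorassAux.ot (X : Set Ordinal) :=
    ((MorassAux.otp_iff_ot hbdX hbdY).1 (M.homog X Y hwrk).1).symm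
  exact MorassAux.omap_eq hbdY hbdX hotYX ha.2 ha.1 hkey
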